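/- arXiv:1405.1303 — 4 statements merged into one kernel-verified Lean document; each statement's English description precedes it below -/
import Mathlib

section
/- Let u_1, ..., u_n be non-zero vectors in R^d such that for some 0 ≤ α < π/2 the angle between any two vectors u_i and u_j does not exceed α. Then the norm of u = u_1 + ... + u_n satisfies ‖u‖ ≥ sqrt(cos α) · (‖u_1‖ + ... + ‖u_n‖). -/
theorem sum_norm_lower_bound_of_angle_le
    (d n : ℕ) (u : Fin n → EuclideanSpace ℝ (Fin d)) (α : ℝ)
    (hu : ∀ i, u i ≠ 0) (hα0 : 0 ≤ α) (hα : α < Real.pi / 2)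
    (hangle : ∀ i j, InnerProductGeometry.angle (u i) (u j) ≤ α) :
    ‖∑ i, u i‖ ≥ Real.sqrt (Real.cos α) * ∑ i, ‖u i‖ := by
  have hcos : 0 < Real.cos α := Real.cos_pos_of_mem_Ioo
    ⟨lt_of_lt_of_le (by linarith [Real.pi_pos]) hα0, hα⟩
  have key : ∀ i j, Real.cos α * (‖u i‖ * ‖u j‖) ≤ inner ℝ (u i) (u j) := by
    intro i j
    have hc : Real.cos α ≤ Real.cos (InnerProductGeometry.angle (u i) (u j)) := by
      apply Real.cos_le_cos_of_nonneg_of_le_pi (InnerProductGeometry.angle_nonneg _ _)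
        (by linarith [Real.pi_pos]) (hangle i j)
    rw [InnerProductGeometry.cos_angle] at hc
    have hpos : 0 < ‖u i‖ * ‖u j‖ :=
      mul_pos (norm_pos_iff.mpr (hu i)) (norm_pos_iff.mpr (hu j))
    rw [le_div_iff₀ hpos] at hc
    linarith [hc]
  set S := ∑ i, ‖u i‖ with hS
  have hS0 : 0 ≤ S := Finset.sum_nonneg fun i _ => norm_nonneg _
  have hsq : Real.cos α * S ^ 2 ≤ ‖∑ i, u i‖ ^ 2 := by
    have h1 : ‖∑ i, u i‖ ^ 2 = ∑ i, ∑ j, (inner ℝ (u i) (u j) : ℝ) := by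
      rw [← real_inner_self_eq_norm_sq, sum_inner]
      exact Finset.sum_congr rfl fun i _ => inner_sum _ _ _
    have h2 : Real.cos α * S ^ 2 = ∑ i, ∑ j, Real.cos α * (‖u i‖ * ‖u j‖) := by
      rw [hS, sq, Finset.sum_mul_sum, Finset.mul_sum]
      exact Finset.sum_congr rfl fun i _ => by rw [Finset.mul_sum]
    rw [h1, h2]
    exact Finset.sum_le_sum fun i _ => Finset.sum_le_sum fun j _ => key i j
  calc Real.sqrt (Real.cos α) * S
      = Real.sqrt (Real.cos α * S ^ 2) := by
        rw [Real.sqrt_mul hcos.le, Real.sqrt_sq hS0]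
    _ ≤ Real.sqrt (‖∑ i, u i‖ ^ 2) := Real.sqrt_le_sqrt hsq
    _ = ‖∑ i, u i‖ := Real.sqrt_sq (norm_nonneg _)
end

section
/- Let A = (a_ij) be an n × n complex matrix and let g(z) = per(J + z(A - J)). Then for every k ≥ 1, the k-th derivative of g at z = 0 equals (n-k)! times the sum, over all pairs of ordered k-tuples (i_1,...,i_k) and (j_1,...,j_k) of distinct indices from {1,...,n}, of the product (a_{i_1 j_1} - 1) ⋯ (a_{i_k j_k} - 1). In particular the k-th derivative vanishes for k > n. -/
/-- The permanent of a square matrix. -/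
noncomputable def perm {n : ℕ} (A : Matrix (Fin n) (Fin n) ℂ) : ℂ :=
  ∑ σ : Equiv.Perm (Fin n), ∏ i, A i (σ i)

private lemma card_perm_extend {n k : ℕ} (a b : Fin k → Fin n) (ha : Function.Injective a)
    (hb : Function.Injective b) :
    (Finset.univ.filter (fun σ : Equiv.Perm (Fin n) => σ ∘ a = b)).card =
      Nat.factorial (n - k) := by
  classical
  rw [← Fintype.card_subtype]
  set e : Set.range a ≃ Set.range b :=
    (Equiv.ofInjective a ha).symm.trans (Equiv.ofInjective b hb) with he
  have hσ₀ : ∀ t, e.extendSubtype (a t) = b t := by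
    intro t
    rw [Equiv.extendSubtype_apply_of_mem e (a t) ⟨t, rfl⟩]
    simp [he]
  set σ₀ : Equiv.Perm (Fin n) := e.extendSubtype with hσ
  have E1 : {σ : Equiv.Perm (Fin n) // σ ∘ a = b} ≃ {σ : Equiv.Perm (Fin n) // σ ∘ a = a} :=
    { toFun := fun σ => ⟨σ₀⁻¹ * σ.1, by
        funext t
        have := congrFun σ.2 t
        simp only [Function.comp_apply] at this ⊢
        simp [Equiv.Perm.mul_apply, this, ← hσ₀ t]⟩
      invFun := fun τ => ⟨σ₀ * τ.1, by
        funext t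
        have := congrFun τ.2 t
        simp only [Function.comp_apply] at this ⊢
        simp [Equiv.Perm.mul_apply, this, hσ₀ t]⟩
      left_inv := fun σ => by simp
      right_inv := fun τ => by simp }
  have E2 : {σ : Equiv.Perm (Fin n) // σ ∘ a = a} ≃
      {σ : Equiv.Perm (Fin n) // ∀ x, ¬ (x ∉ Set.range a) → σ x = x} := by
    apply Equiv.subtypeEquivRight
    intro σ
    constructor
    · rintro h x hx
      rw [not_not] at hx
      obtain ⟨t, rfl⟩ := hx
      exact congrFun h t
    · intro h
      funext t
      exact h (a t) (by simp)
  have E3 := (Equiv.Perm.subtypeEquivSubtypePerm (fun x : Fin n => x ∉ Set.range a)).symm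
  rw [Fintype.card_congr (E1.trans (E2.trans E3))]
  rw [Fintype.card_perm]
  congr 1
  rw [Fintype.card_subtype_compl]
  congr 1
  · simp
  · rw [Fintype.card_congr (Equiv.ofInjective a ha).symm, Fintype.card_fin]

private lemma lemB {n k : ℕ} (a : Fin k → Fin n) (ha : Function.Injective a)
    (G : Fin k → Fin n → ℂ) :
    ∑ σ : Equiv.Perm (Fin n), ∏ t, G t (σ (a t)) =
      (Nat.factorial (n - k) : ℂ) *
        ∑ b ∈ Finset.univ.filter (fun b : Fin k → Fin n => Function.Injective b),
          ∏ t, G t (b t) := by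
  classical
  rw [← Finset.sum_fiberwise_of_maps_to (g := fun σ : Equiv.Perm (Fin n) => σ ∘ a)
    (t := Finset.univ.filter (fun b : Fin k → Fin n => Function.Injective b))
    (fun σ _ => by simp [Finset.mem_filter, Function.Injective.comp (Equiv.injective σ) ha])]
  rw [Finset.mul_sum]
  apply Finset.sum_congr rfl
  intro b hb
  rw [Finset.mem_filter] at hb
  have : ∀ σ ∈ Finset.univ.filter (fun σ : Equiv.Perm (Fin n) => σ ∘ a = b),
      (∏ t, G t (σ (a t))) = ∏ t, G t (b t) := by
    intro σ hσ
    rw [Finset.mem_filter] at hσ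
    exact Finset.prod_congr rfl fun t _ => by rw [← congrFun hσ.2 t]; rfl
  rw [Finset.sum_congr rfl this, Finset.sum_const, card_perm_extend a b ha hb.2]
  simp [mul_comm]

private lemma card_fiber_image {n k : ℕ} (S : Finset (Fin n)) (hS : S.card = k) :
    ((Finset.univ.filter (fun a : Fin k → Fin n => Function.Injective a)).filter
      (fun a => Finset.image a Finset.univ = S)).card = Nat.factorial k := by
  classical
  rw [Finset.filter_filter, ← Fintype.card_subtype]
  have E : {a : Fin k → Fin n // Function.Injective a ∧ Finset.image a Finset.univ = S} ≃
      (Fin k ↪ {x // x ∈ S}) :=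
    { toFun := fun a => ⟨fun t => ⟨a.1 t, by have h := Finset.mem_image_of_mem a.1 (Finset.mem_univ t); rwa [a.2.2] at h⟩,
        fun s t h => a.2.1 (by simpa using congrArg Subtype.val h)⟩
      invFun := fun f => ⟨fun t => (f t).1, by
        constructor
        · intro s t h
          exact f.injective (Subtype.ext h)
        · apply Finset.eq_of_subset_of_card_le
          · intro x hx
            simp only [Finset.mem_image, Finset.mem_univ, true_and] at hx
            obtain ⟨t, rfl⟩ := hx
            exact (f t).2
          · rw [hS, Finset.card_image_of_injective _ (fun s t h => f.injective (Subtype.ext h)),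
              Finset.card_univ, Fintype.card_fin]⟩
      left_inv := fun a => by ext t; rfl
      right_inv := fun f => by ext t; rfl }
  rw [Fintype.card_congr E, Fintype.card_embedding_eq]
  simp [Fintype.card_coe, hS, Nat.descFactorial_self]

private lemma lemA {n k : ℕ} (F : Fin n → ℂ) :
    ∑ a ∈ Finset.univ.filter (fun a : Fin k → Fin n => Function.Injective a), ∏ t, F (a t) =
      (Nat.factorial k : ℂ) *
        ∑ S ∈ Finset.univ.powersetCard k, ∏ i ∈ S, F i := by
  classical
  rw [← Finset.sum_fiberwise_of_maps_to
    (g := fun a : Fin k → Fin n => Finset.image a Finset.univ)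
    (t := (Finset.univ : Finset (Fin n)).powersetCard k)
    (fun a hha => by
      rw [Finset.mem_filter] at hha
      rw [Finset.mem_powersetCard]
      exact ⟨Finset.subset_univ _, by
        rw [Finset.card_image_of_injective _ hha.2, Finset.card_univ, Fintype.card_fin]⟩)]
  rw [Finset.mul_sum]
  apply Finset.sum_congr rfl
  intro S hS
  rw [Finset.mem_powersetCard] at hS
  have : ∀ a ∈ (Finset.univ.filter (fun a : Fin k → Fin n => Function.Injective a)).filter
      (fun a => Finset.image a Finset.univ = S), (∏ t, F (a t)) = ∏ i ∈ S, F i := by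
    intro a hha
    rw [Finset.mem_filter, Finset.mem_filter] at hha
    rw [← hha.2, Finset.prod_image (fun s _ t _ h => hha.1.2 h)]
  rw [Finset.sum_congr rfl this, Finset.sum_const, card_fiber_image S hS.2]
  simp [mul_comm]

private lemma iteratedDeriv_polyEval (p : Polynomial ℂ) (k : ℕ) :
    iteratedDeriv k (fun z => p.eval z) = fun z => (Polynomial.derivative^[k] p).eval z := by
  induction k with
  | zero => rfl
  | succ k ih =>
    rw [iteratedDeriv_succ, ih]
    funext z
    rw [Function.iterate_succ_apply']
    exact Polynomial.deriv _

private lemma coeff_prod_one_add {n : ℕ} (c : Fin n → ℂ) (k : ℕ) :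
    (∏ i, (1 + Polynomial.C (c i) * Polynomial.X)).coeff k =
      ∑ S ∈ Finset.univ.powersetCard k, ∏ i ∈ S, c i := by
  classical
  have h1 : ∀ i ∈ (Finset.univ : Finset (Fin n)), (1 + Polynomial.C (c i) * Polynomial.X)
      = Polynomial.C (c i) * Polynomial.X + 1 := fun i _ => add_comm _ _
  rw [Finset.prod_congr rfl h1, Finset.prod_add]
  simp only [Finset.prod_const_one, mul_one, Finset.prod_mul_distrib, Finset.prod_const]
  rw [Polynomial.finset_sum_coeff]
  have h2 : ∀ S ∈ (Finset.univ : Finset (Fin n)).powerset,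
      ((∏ i ∈ S, Polynomial.C (c i)) * Polynomial.X ^ S.card).coeff k
        = if S.card = k then ∏ i ∈ S, c i else 0 := by
    intro S _
    rw [← map_prod, Polynomial.coeff_C_mul, Polynomial.coeff_X_pow]
    simp [eq_comm]
  rw [Finset.sum_congr rfl h2, ← Finset.sum_filter, Finset.powersetCard_eq_filter]

theorem iteratedDeriv_perm_interpolation (n : ℕ) (A : Matrix (Fin n) (Fin n) ℂ)
    (g : ℂ → ℂ) (hg : ∀ z, g z = perm (fun i j => 1 + z * (A i j - 1))) :
    (∀ k : ℕ, 1 ≤ k →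
      iteratedDeriv k g 0 =
        (Nat.factorial (n - k) : ℂ) *
          ∑ a ∈ Finset.univ.filter (fun a : Fin k → Fin n => Function.Injective a),
            ∑ b ∈ Finset.univ.filter (fun b : Fin k → Fin n => Function.Injective b),
              ∏ t, (A (a t) (b t) - 1)) ∧
    ∀ k : ℕ, n < k → iteratedDeriv k g 0 = 0 := by
  classical
  set P : Polynomial ℂ :=
    ∑ σ : Equiv.Perm (Fin n), ∏ i, (1 + Polynomial.C (A i (σ i) - 1) * Polynomial.X) with hP
  have hgeval : g = fun z => P.eval z := by
    funext z
    rw [hg z]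
    unfold perm
    rw [hP, Polynomial.eval_finset_sum]
    apply Finset.sum_congr rfl
    intro σ _
    rw [Polynomial.eval_prod]
    apply Finset.prod_congr rfl
    intro i _
    simp [mul_comm]
  have hderiv : ∀ k : ℕ, iteratedDeriv k g 0 = (Nat.factorial k : ℂ) * P.coeff k := by
    intro k
    rw [hgeval, iteratedDeriv_polyEval]
    show Polynomial.eval 0 ((⇑Polynomial.derivative)^[k] P) = _
    rw [← Polynomial.coeff_zero_eq_eval_zero, Polynomial.coeff_iterate_derivative]
    simp [Nat.descFactorial_self, nsmul_eq_mul]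
  have hcoeff : ∀ k : ℕ, P.coeff k = ∑ σ : Equiv.Perm (Fin n),
      ∑ S ∈ Finset.univ.powersetCard k, ∏ i ∈ S, (A i (σ i) - 1) := by
    intro k
    rw [hP, Polynomial.finset_sum_coeff]
    exact Finset.sum_congr rfl fun σ _ => coeff_prod_one_add _ k
  have main : ∀ k : ℕ, iteratedDeriv k g 0 =
      (Nat.factorial (n - k) : ℂ) *
        ∑ a ∈ Finset.univ.filter (fun a : Fin k → Fin n => Function.Injective a),
          ∑ b ∈ Finset.univ.filter (fun b : Fin k → Fin n => Function.Injective b),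
            ∏ t, (A (a t) (b t) - 1) := by
    intro k
    rw [hderiv, hcoeff, Finset.mul_sum]
    rw [Finset.sum_congr rfl (fun σ _ => (lemA (fun i => A i (σ i) - 1)).symm)]
    rw [Finset.sum_comm, Finset.mul_sum]
    apply Finset.sum_congr rfl
    intro a ha
    rw [Finset.mem_filter] at ha
    exact lemB a ha.2 (fun t j => A (a t) j - 1)
  refine ⟨fun k _ => main k, fun k hk => ?_⟩
  rw [main k]
  have hempty : (Finset.univ.filter (fun a : Fin k → Fin n => Function.Injective a)) = ∅ := by
    rw [Finset.filter_eq_empty_iff]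
    intro a _ hinj
    have := Fintype.card_le_of_injective a hinj
    simp only [Fintype.card_fin] at this
    omega
  rw [hempty]
  simp
end

section
/- There is an absolute constant δ > 0 (one can take δ = 0.195) such that if Z = (z_ij) is an n × n complex matrix satisfying |z_ij - 1| ≤ δ for all i, j, then per Z ≠ 0. -/
open Complex

theorem perm_submatrix {n : ℕ} (A : Matrix (Fin n) (Fin n) ℂ) (α β : Equiv.Perm (Fin n)) :
    perm (A.submatrix ⇑α ⇑β) = perm A := by
  unfold perm
  refine Fintype.sum_equiv ((Equiv.mulRight α).trans (Equiv.mulLeft β⁻¹)).symm _ _ fun σ => ?_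
  simp only [Equiv.symm_trans_apply, Equiv.mulLeft_symm, Equiv.mulRight_symm,
    Equiv.coe_mulLeft, Equiv.coe_mulRight, Matrix.submatrix_apply]
  refine Fintype.prod_equiv α _ _ fun x => ?_
  simp [Equiv.Perm.mul_apply]

theorem perm_transpose {n : ℕ} (A : Matrix (Fin n) (Fin n) ℂ) : perm A.transpose = perm A := by
  unfold perm
  refine Fintype.sum_equiv (Equiv.inv _) _ _ fun σ => ?_
  simp only [Equiv.inv_apply, Matrix.transpose_apply]
  exact Fintype.prod_equiv σ _ _ fun x => by simp


theorem exists_perm_comp {n m : ℕ} (f g : Fin n → Fin m) (hf : Function.Injective f)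
    (hg : Function.Injective g) (hr : Set.range f = Set.range g) :
    ∃ τ : Equiv.Perm (Fin n), ∀ b, f (τ b) = g b := by
  have hex : ∀ b, ∃ a, f a = g b := by
    intro b
    have : g b ∈ Set.range f := by rw [hr]; exact Set.mem_range_self b
    exact this
  choose t ht using hex
  have hinj : Function.Injective t := by
    intro a b hab
    apply hg
    rw [← ht a, ← ht b, hab]
  exact ⟨Equiv.ofBijective t (Finite.injective_iff_bijective.mp hinj), fun b => ht b⟩

theorem range_swap_comp {m : ℕ} (p q : Fin (m+1)) (f : Fin m → Fin (m+1))
    (hr : Set.range f = {q}ᶜ) :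
    Set.range (fun b => Equiv.swap q p (f b)) = {p}ᶜ := by
  rw [show (fun b => Equiv.swap q p (f b)) = (Equiv.swap q p) ∘ f from rfl, Set.range_comp, hr]
  ext x
  simp only [Set.mem_image, Set.mem_compl_iff, Set.mem_singleton_iff]
  constructor
  · rintro ⟨y, hy, rfl⟩ h
    exact hy (by simpa using congrArg (Equiv.swap q p).symm (h.trans (Equiv.swap_apply_left q p).symm))
  · intro hx
    exact ⟨Equiv.swap q p x, by
      intro h
      apply hx
      have := congrArg (Equiv.swap q p) h
      simpa using this, by simp⟩

theorem perm_expand {n : ℕ} (A : Matrix (Fin (n+1)) (Fin (n+1)) ℂ) :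
    perm A = ∑ j : Fin (n+1), A 0 j * perm (A.submatrix Fin.succ j.succAbove) := by
  have h0 : perm A = ∑ x : Fin (n+1) × Equiv.Perm (Fin n),
      ∏ i, A i (Equiv.Perm.decomposeFin.symm x i) := by
    rw [perm, ← Equiv.sum_comp Equiv.Perm.decomposeFin.symm fun σ => ∏ i, A i (σ i)]
  rw [h0, Fintype.sum_prod_type]
  refine Finset.sum_congr rfl fun p _ => ?_
  have hterm : ∀ σ : Equiv.Perm (Fin n),
      (∏ i, A i (Equiv.Perm.decomposeFin.symm (p, σ) i)) =
      A 0 p * ∏ i : Fin n, A i.succ (Equiv.swap 0 p (σ i).succ) := by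
    intro σ
    rw [Fin.prod_univ_succ]
    simp [Equiv.Perm.decomposeFin_symm_apply_zero, Equiv.Perm.decomposeFin_symm_apply_succ]
  simp_rw [hterm, ← Finset.mul_sum]
  congr 1
  -- now: ∑ σ, ∏ i, A i.succ (swap 0 p (σ i).succ) = perm (A.submatrix Fin.succ p.succAbove)
  obtain ⟨τ, hτ⟩ := exists_perm_comp (p.succAbove) (fun b => Equiv.swap 0 p b.succ)
    (Fin.succAbove_right_injective)
    ((Equiv.swap 0 p).injective.comp (Fin.succ_injective n))
    (by rw [Fin.range_succAbove]
        exact (range_swap_comp p 0 Fin.succ (Fin.range_succ n)).symm)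
  rw [perm]
  refine Fintype.sum_equiv (Equiv.mulLeft τ) _ _ fun σ => ?_
  refine Finset.prod_congr rfl fun i _ => ?_
  simp only [Matrix.submatrix_apply, Equiv.coe_mulLeft, Equiv.Perm.mul_apply]
  rw [hτ]


lemma sq_le_imp (x c : ℝ) (hx : 0 ≤ x) (hc : 0 ≤ c) (h : c^2 ≤ x^2) : c ≤ x := by nlinarith

lemma re_sq_ge {p : ℂ} (hp : ‖p‖ ≤ 13/60) :
    0 ≤ (1+p).re ∧ (1 - (13/60:ℝ)^2) * (‖1+p‖)^2 ≤ ((1+p).re)^2 ∧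
      ((1+p).im)^2 ≤ (13/60:ℝ)^2 * (‖1+p‖)^2 := by
  have h1 : (p.re)^2 + (p.im)^2 ≤ (13/60:ℝ)^2 := by
    have h := Complex.sq_norm p
    rw [Complex.normSq_apply] at h
    nlinarith [norm_nonneg p, mul_self_le_mul_self (norm_nonneg p) hp]
  have hre : (1+p).re = 1 + p.re := by simp
  have him : (1+p).im = p.im := by simp
  have habs : (‖1+p‖)^2 = (1+p.re)^2 + (p.im)^2 := by
    have h := Complex.sq_norm (1+p)
    rw [Complex.normSq_apply, hre, him] at h
    rw [h]; ring
  refine ⟨by rw [hre]; nlinarith [sq_nonneg p.im], ?_, ?_⟩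
  · rw [hre, habs]; nlinarith [sq_nonneg (p.re + (13/60:ℝ)^2)]
  · rw [him, habs]; nlinarith [sq_nonneg (p.re + (13/60:ℝ)^2)]

lemma pair_cone {p q : ℂ} (hp : ‖p‖ ≤ 13/60) (hq : ‖q‖ ≤ 13/60) :
    (9/10 : ℝ) * (‖1+p‖ * ‖1+q‖) ≤ ((1+p) * (starRingEnd ℂ) (1+q)).re := by
  obtain ⟨hp0, hp2, hp3⟩ := re_sq_ge hp
  obtain ⟨hq0, hq2, hq3⟩ := re_sq_ge hq
  have hre : ((1+p) * (starRingEnd ℂ) (1+q)).re = (1+p).re * (1+q).re + (1+p).im * (1+q).im := by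
    simp [Complex.mul_re]
  rw [hre]
  set A := ‖1+p‖ with hA
  set B := ‖1+q‖ with hB
  have hA0 : 0 ≤ A := norm_nonneg _
  have hB0 : 0 ≤ B := norm_nonneg _
  have h1 : (1 - (13/60:ℝ)^2) * (A*B) ≤ (1+p).re * (1+q).re := by
    apply sq_le_imp _ _ (mul_nonneg hp0 hq0) (by positivity)
    calc ((1 - (13/60:ℝ)^2) * (A*B))^2 = ((1-(13/60:ℝ)^2)*A^2) * ((1-(13/60:ℝ)^2)*B^2) := by ring
    _ ≤ ((1+p).re)^2 * ((1+q).re)^2 := by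
        apply mul_le_mul hp2 hq2 (by positivity) (sq_nonneg _)
    _ = ((1+p).re * (1+q).re)^2 := by ring
  have h2 : -((13/60:ℝ)^2 * (A*B)) ≤ (1+p).im * (1+q).im := by
    have hip : |(1+p).im| ≤ (13/60:ℝ) * A := by
      apply sq_le_imp _ _ (by positivity) (abs_nonneg _)
      rw [_root_.sq_abs]; nlinarith
    have hiq : |(1+q).im| ≤ (13/60:ℝ) * B := by
      apply sq_le_imp _ _ (by positivity) (abs_nonneg _)
      rw [_root_.sq_abs]; nlinarith
    have := neg_abs_le ((1+p).im * (1+q).im)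
    have habs : |(1+p).im * (1+q).im| ≤ (13/60:ℝ)^2*(A*B) := by
      rw [abs_mul]
      calc |(1+p).im| * |(1+q).im| ≤ ((13/60:ℝ)*A) * ((13/60:ℝ)*B) :=
        mul_le_mul hip hiq (abs_nonneg _) (by positivity)
      _ = (13/60:ℝ)^2*(A*B) := by ring
    linarith
  nlinarith [mul_nonneg hA0 hB0]

def Cone (x y : ℂ) : Prop :=
  (9/10 : ℝ) * (‖x‖ * ‖y‖) ≤ (x * (starRingEnd ℂ) y).re


lemma sum_step {m : ℕ} (u a b : Fin (m+1) → ℂ)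
    (hu : ∀ j, u j ≠ 0)
    (hc : ∀ j k, Cone (u j) (u k))
    (ha : ∀ j, ‖a j - 1‖ ≤ 39/200)
    (hb : ∀ j, ‖b j - 1‖ ≤ 39/200) :
    (∑ j, a j * u j) ≠ 0 ∧ Cone (∑ j, a j * u j) (∑ j, b j * u j) := by
  classical
  set S : ℂ := ∑ j, u j with hSdef
  set T : ℝ := ∑ j, ‖u j‖ with hTdef
  have hT0 : 0 < T := by
    refine Finset.sum_pos' (fun j _ => norm_nonneg _) ⟨0, Finset.mem_univ _, ?_⟩
    exact norm_pos_iff.mpr (hu 0)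
  -- |S| ≥ 0.9 T
  have hS : (9/10 : ℝ) * T ≤ ‖S‖ := by
    have hre : (9/10:ℝ) * T * ‖u 0‖ ≤ (S * (starRingEnd ℂ) (u 0)).re := by
      have : (S * (starRingEnd ℂ) (u 0)).re = ∑ j, (u j * (starRingEnd ℂ) (u 0)).re := by
        rw [hSdef, Finset.sum_mul, Complex.re_sum]
      rw [this, hTdef, Finset.mul_sum, Finset.sum_mul]
      apply Finset.sum_le_sum
      intro j _
      have := hc j 0
      unfold Cone at this
      linarith [this]
    have hle : (S * (starRingEnd ℂ) (u 0)).re ≤ ‖S‖ * ‖u 0‖ := by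
      calc (S * (starRingEnd ℂ) (u 0)).re ≤ ‖S * (starRingEnd ℂ) (u 0)‖ :=
        Complex.re_le_norm _
      _ = ‖S‖ * ‖u 0‖ := by rw [norm_mul, Complex.norm_conj]
    have hu0 : 0 < ‖u 0‖ := norm_pos_iff.mpr (hu 0)
    have := le_trans hre hle
    exact le_of_mul_le_mul_right (by linarith) hu0
  have hSne : S ≠ 0 := by
    intro h
    rw [h] at hS
    simp at hS
    nlinarith
  have hSpos : 0 < ‖S‖ := norm_pos_iff.mpr hSne
  -- decomposition
  have key : ∀ c : Fin (m+1) → ℂ, (∀ j, ‖c j - 1‖ ≤ 39/200) →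
      ∃ p : ℂ, ‖p‖ ≤ 13/60 ∧ (∑ j, c j * u j) = S * (1 + p) := by
    intro c hcl
    set e : ℂ := ∑ j, (c j - 1) * u j with hedef
    have he : ‖e‖ ≤ (39/200 : ℝ) * T := by
      calc ‖e‖ ≤ ∑ j, ‖(c j - 1) * u j‖ := by
            rw [hedef]
            exact norm_sum_le Finset.univ (fun j => (c j - 1) * u j)
      _ ≤ ∑ j, (39/200 : ℝ) * ‖u j‖ := by
            apply Finset.sum_le_sum
            intro j _
            rw [norm_mul]
            exact mul_le_mul_of_nonneg_right (hcl j) (norm_nonneg _)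
      _ = (39/200 : ℝ) * T := by rw [hTdef, Finset.mul_sum]
    refine ⟨e / S, ?_, ?_⟩
    · rw [norm_div]
      rw [div_le_iff₀ hSpos]
      calc ‖e‖ ≤ (39/200:ℝ) * T := he
      _ ≤ (13/60:ℝ) * ((9/10:ℝ) * T) := by ring_nf; nlinarith
      _ ≤ (13/60:ℝ) * ‖S‖ := by nlinarith
    · have : (∑ j, c j * u j) = S + e := by
        rw [hSdef, hedef, ← Finset.sum_add_distrib]
        apply Finset.sum_congr rfl
        intro j _
        ring
      rw [this]
      field_simp
  obtain ⟨p, hp, hxp⟩ := key a ha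
  obtain ⟨q, hq, hyq⟩ := key b hb
  have h1p : (1 : ℂ) + p ≠ 0 := by
    intro h
    have : ‖p‖ = 1 := by
      have : p = -1 := by linear_combination h
      rw [this]; simp
    linarith [hp, this]
  constructor
  · rw [hxp]
    exact mul_ne_zero hSne h1p
  · unfold Cone
    rw [hxp, hyq]
    have expand : (S * (1 + p)) * (starRingEnd ℂ) (S * (1 + q))
        = ((Complex.normSq S : ℝ) : ℂ) * ((1+p) * (starRingEnd ℂ) (1+q)) := by
      rw [map_mul, ← Complex.mul_conj]
      ring
    rw [expand]
    rw [Complex.re_ofReal_mul]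
    rw [norm_mul, norm_mul]
    have hnsq : Complex.normSq S = ‖S‖ * ‖S‖ := by
      rw [Complex.normSq_eq_norm_sq]; ring
    rw [hnsq]
    have := pair_cone hp hq
    nlinarith [norm_nonneg (1+p), norm_nonneg (1+q), mul_pos hSpos hSpos]

def Close {n : ℕ} (Z : Matrix (Fin n) (Fin n) ℂ) : Prop :=
  ∀ i j, ‖Z i j - 1‖ ≤ 39/200

def OneRow {n : ℕ} (Z Z' : Matrix (Fin n) (Fin n) ℂ) : Prop :=
  ∃ r : ℕ, ∀ i : Fin n, (i : ℕ) ≠ r → ∀ j, Z i j = Z' i j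

def OneCol {n : ℕ} (Z Z' : Matrix (Fin n) (Fin n) ℂ) : Prop :=
  ∃ c : ℕ, ∀ j : Fin n, (j : ℕ) ≠ c → ∀ i, Z i j = Z' i j







lemma cone_self (u : ℂ) : Cone u u := by
  unfold Cone
  rw [Complex.mul_conj]
  rw [Complex.ofReal_re, Complex.normSq_eq_norm_sq]
  nlinarith [norm_nonneg u]

lemma perm_zero (A : Matrix (Fin 0) (Fin 0) ℂ) : perm A = 1 := by
  unfold perm
  rw [Finset.sum_eq_single 1]
  · simp
  · intro σ _ h
    exact absurd (Subsingleton.elim σ 1) h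
  · intro h
    exact absurd (Finset.mem_univ 1) h

theorem main_step : ∀ n : ℕ, ∀ Z Z' : Matrix (Fin n) (Fin n) ℂ,
    Close Z → Close Z' → (OneRow Z Z' ∨ OneCol Z Z') →
    perm Z ≠ 0 ∧ Cone (perm Z) (perm Z') := by
  intro n
  induction n with
  | zero =>
    intro Z Z' _ _ _
    rw [perm_zero Z, perm_zero Z']
    exact ⟨one_ne_zero, cone_self 1⟩
  | succ n IH =>
    have hrowcase : ∀ Z Z' : Matrix (Fin (n+1)) (Fin (n+1)) ℂ,
        Close Z → Close Z' → OneRow Z Z' → perm Z ≠ 0 ∧ Cone (perm Z) (perm Z') := by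
      intro Z Z' hZ hZ' ⟨r, hrow⟩
      set r0 : Fin (n+1) := if h : r < n+1 then ⟨r, h⟩ else 0 with hr0def
      have hrow' : ∀ i : Fin (n+1), i ≠ r0 → ∀ j, Z i j = Z' i j := by
        intro i hi j
        apply hrow
        intro hir
        rw [hr0def] at hi
        by_cases h : r < n+1
        · rw [dif_pos h] at hi
          exact hi (Fin.ext hir)
        · omega
      set ρ : Equiv.Perm (Fin (n+1)) := Equiv.swap 0 r0 with hρdef
      set Y := Z.submatrix ⇑ρ ⇑(Equiv.refl (Fin (n+1))) with hYdef
      set Y' := Z'.submatrix ⇑ρ ⇑(Equiv.refl (Fin (n+1))) with hY'def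
      have hYZ : perm Y = perm Z := perm_submatrix Z ρ (Equiv.refl _)
      have hY'Z' : perm Y' = perm Z' := perm_submatrix Z' ρ (Equiv.refl _)
      have hYc : Close Y := fun i j => hZ _ _
      have hY'c : Close Y' := fun i j => hZ' _ _
      have hYrow : ∀ i : Fin (n+1), i ≠ 0 → ∀ j, Y i j = Y' i j := by
        intro i hi j
        have : ρ i ≠ r0 := by
          intro h
          apply hi
          have := congrArg ρ h
          rw [hρdef] at this
          simpa [Equiv.swap_apply_right] using this
        exact hrow' _ this j
      -- the minors agree
      have hminor : ∀ j : Fin (n+1), Y.submatrix Fin.succ j.succAbove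
          = Y'.submatrix Fin.succ j.succAbove := by
        intro j
        funext i b
        exact hYrow i.succ (Fin.succ_ne_zero i) _
      set u : Fin (n+1) → ℂ := fun j => perm (Y.submatrix Fin.succ j.succAbove) with hudef
      -- minor facts
      have hminclose : ∀ j : Fin (n+1), Close (Y.submatrix Fin.succ j.succAbove) :=
        fun j i b => hYc _ _
      have humem : ∀ j, u j ≠ 0 := by
        intro j
        exact (IH _ _ (hminclose j) (hminclose j) (Or.inl ⟨0, fun i _ b => rfl⟩)).1
      have hcone : ∀ j k, Cone (u j) (u k) := by
        intro j k
        by_cases hjk : j = k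
        · subst hjk; exact cone_self _
        · set A := Y.submatrix Fin.succ j.succAbove with hAdef
          set B := Y.submatrix Fin.succ k.succAbove with hBdef
          set E : Matrix (Fin n) (Fin n) ℂ :=
            fun i b => Y i.succ (Equiv.swap k j (k.succAbove b)) with hEdef
          have hrange : Set.range (fun b => Equiv.swap k j (k.succAbove b)) = {j}ᶜ :=
            range_swap_comp j k k.succAbove (Fin.range_succAbove k)
          obtain ⟨τ, hτ⟩ := exists_perm_comp (j.succAbove)
            (fun b => Equiv.swap k j (k.succAbove b))
            (Fin.succAbove_right_injective)
            ((Equiv.swap k j).injective.comp (Fin.succAbove_right_injective))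
            (by rw [Fin.range_succAbove, hrange])
          have hEA : perm E = perm A := by
            have : E = A.submatrix ⇑(Equiv.refl (Fin n)) ⇑τ := by
              funext i b
              simp only [hEdef, hAdef, Matrix.submatrix_apply, Equiv.refl_apply]
              rw [← hτ b]
            rw [this, perm_submatrix]
          have hEclose : Close E := fun i b => hYc _ _
          have hBclose : Close B := hminclose k
          have hcol : OneCol E B := by
            by_cases hex : ∃ b : Fin n, k.succAbove b = j
            · refine ⟨(hex.choose : ℕ), fun b hb i => ?_⟩
              have hne1 : k.succAbove b ≠ k := Fin.succAbove_ne k b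
              have hne2 : k.succAbove b ≠ j := by
                intro h
                apply hb
                have : b = hex.choose := Fin.succAbove_right_injective (h.trans hex.choose_spec.symm)
                rw [this]
              simp only [hEdef, hBdef, Matrix.submatrix_apply]
              rw [Equiv.swap_apply_of_ne_of_ne hne1 hne2]
            · refine ⟨0, fun b _ i => ?_⟩
              have hne1 : k.succAbove b ≠ k := Fin.succAbove_ne k b
              have hne2 : k.succAbove b ≠ j := fun h => hex ⟨b, h⟩
              simp only [hEdef, hBdef, Matrix.submatrix_apply]
              rw [Equiv.swap_apply_of_ne_of_ne hne1 hne2]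
          have := IH E B hEclose hBclose (Or.inr hcol)
          rw [hEA] at this
          exact this.2
      have hexpY : perm Y = ∑ j, Y 0 j * u j := perm_expand Y
      have hexpY' : perm Y' = ∑ j, Y' 0 j * u j := by
        rw [perm_expand Y']
        apply Finset.sum_congr rfl
        intro j _
        have hue : u j = perm (Y'.submatrix Fin.succ j.succAbove) := by
          show perm (Y.submatrix Fin.succ j.succAbove) = _
          rw [hminor j]
        rw [hue]
      have ha : ∀ j, ‖Y 0 j - 1‖ ≤ 39/200 := fun j => hYc 0 j
      have hb : ∀ j, ‖Y' 0 j - 1‖ ≤ 39/200 := fun j => hY'c 0 j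
      have := sum_step u (fun j => Y 0 j) (fun j => Y' 0 j) humem hcone ha hb
      rw [← hexpY, ← hexpY'] at this
      rw [← hYZ, ← hY'Z']
      exact this
    intro Z Z' hZ hZ' hd
    rcases hd with hrow | hcol
    · exact hrowcase Z Z' hZ hZ' hrow
    · have hT := hrowcase Z.transpose Z'.transpose
        (fun i j => hZ j i) (fun i j => hZ' j i)
        (by obtain ⟨c, hc⟩ := hcol; exact ⟨c, fun i hi j => hc i hi j⟩)
      rw [perm_transpose, perm_transpose] at hT
      exact hT

theorem perm_ne_zero_of_close_to_one :
    ∃ δ : ℝ, 0 < δ ∧ δ = 0.195 ∧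
      ∀ (n : ℕ) (Z : Matrix (Fin n) (Fin n) ℂ),
        (∀ i j, ‖Z i j - 1‖ ≤ δ) → perm Z ≠ 0 := by
  refine ⟨0.195, by norm_num, rfl, ?_⟩
  intro n Z hZ
  have hclose : Close Z := by
    intro i j
    have := hZ i j
    norm_num at this ⊢
    linarith
  exact (main_step n Z Z hclose hclose (Or.inl ⟨0, fun i _ j => rfl⟩)).1
end

section
/- For non-zero complex numbers w_1, ..., w_n such that the angle between any two of them is at most α, where 0 ≤ α < π/2, one has |w_1 + ... + w_n| ≥ sqrt(cos α) · (|w_1| + ... + |w_n|). In particular w_1 + ... + w_n ≠ 0. -/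
open Complex Finset
set_option maxHeartbeats 800000

theorem abs_sum_lower_bound_of_angle_le (n : ℕ) (hn : 0 < n)
    (w : Fin n → ℂ) (hw : ∀ i, w i ≠ 0) (α : ℝ)
    (hα0 : 0 ≤ α) (hα : α < Real.pi / 2)
    (hangle : ∀ i j, |Complex.arg (w i / w j)| ≤ α) :
    ‖∑ i, w i‖ ≥ Real.sqrt (Real.cos α) * ∑ i, ‖w i‖ ∧
      (∑ i, w i) ≠ 0 := by
  have hc : 0 < Real.cos α :=
    Real.cos_pos_of_mem_Ioo ⟨by linarith [Real.pi_pos], hα⟩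
  have key : ∀ i j, Real.cos α * (‖w i‖ * ‖w j‖)
      ≤ (w i * starRingEnd ℂ (w j)).re := by
    intro i j
    have hij : w i / w j ≠ 0 := div_ne_zero (hw i) (hw j)
    have h1 : w i * starRingEnd ℂ (w j)
        = (w i / w j) * ((Complex.normSq (w j) : ℝ) : ℂ) := by
      rw [← Complex.mul_conj, div_mul_eq_mul_div, mul_comm (w j),
        mul_div_assoc, mul_div_assoc, div_self (hw j), mul_one]
    have hre : (w i * starRingEnd ℂ (w j)).re
        = (w i / w j).re * Complex.normSq (w j) := by
      rw [h1]; simp [Complex.mul_re]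
    have hcosarg : Real.cos (Complex.arg (w i / w j))
        = (w i / w j).re / ‖w i / w j‖ := Complex.cos_arg hij
    have hcosle : Real.cos α ≤ Real.cos (Complex.arg (w i / w j)) := by
      rw [← Real.cos_abs (Complex.arg (w i / w j))]
      apply Real.cos_le_cos_of_nonneg_of_le_pi (abs_nonneg _)
      · linarith [Real.pi_pos]
      · exact hangle i j
    have habs : ‖w i / w j‖ = ‖w i‖ / ‖w j‖ :=
      norm_div _ _
    have hbj : (0:ℝ) < ‖w j‖ := by
      simpa using (norm_pos_iff.mpr (hw j))
    have hbi : (0:ℝ) < ‖w i‖ := by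
      simpa using (norm_pos_iff.mpr (hw i))
    have hre2 : (w i / w j).re
        = Real.cos (Complex.arg (w i / w j)) * (‖w i‖ / ‖w j‖) := by
      rw [hcosarg, habs]
      field_simp
    rw [hre, hre2, Complex.normSq_eq_norm_sq]
    have : Real.cos α * (‖w i‖ * ‖w j‖)
        ≤ Real.cos (Complex.arg (w i / w j)) * (‖w i‖ * ‖w j‖) := by
      apply mul_le_mul_of_nonneg_right hcosle (by positivity)
    calc Real.cos α * (‖w i‖ * ‖w j‖)
        ≤ Real.cos (Complex.arg (w i / w j)) * (‖w i‖ * ‖w j‖) := this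
      _ = Real.cos (Complex.arg (w i / w j)) * (‖w i‖ / ‖w j‖)
            * ‖w j‖ ^ 2 := by field_simp
  set S := ∑ i, ‖w i‖ with hS
  have hSpos : 0 < S := by
    apply Finset.sum_pos
    · intro i _; simpa using norm_pos_iff.mpr (hw i)
    · exact Finset.univ_nonempty_iff.mpr ⟨⟨0, hn⟩⟩
  have hnormSq : Real.cos α * S ^ 2 ≤ Complex.normSq (∑ i, w i) := by
    have hexp : Complex.normSq (∑ i, w i)
        = ∑ i, ∑ j, (w i * starRingEnd ℂ (w j)).re := by
      have h0 : Complex.normSq (∑ i, w i)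
          = ((∑ i, w i) * starRingEnd ℂ (∑ i, w i)).re := by
        rw [Complex.mul_conj]; simp
      rw [h0, map_sum, Finset.sum_mul, Complex.re_sum]
      refine Finset.sum_congr rfl fun i _ => ?_
      rw [Finset.mul_sum, Complex.re_sum]
    rw [hexp, hS]
    have : Real.cos α * (∑ i, ‖w i‖) ^ 2
        = ∑ i, ∑ j, Real.cos α * (‖w i‖ * ‖w j‖) := by
      rw [sq, Finset.sum_mul_sum]
      rw [Finset.mul_sum]
      exact Finset.sum_congr rfl fun i _ => by rw [Finset.mul_sum]
    rw [this]
    exact Finset.sum_le_sum fun i _ => Finset.sum_le_sum fun j _ => key i j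
  have habs_sum : Real.sqrt (Real.cos α) * S ≤ ‖∑ i, w i‖ := by
    have h1 : ‖∑ i, w i‖ = Real.sqrt (Complex.normSq (∑ i, w i)) :=
      by rw [Complex.normSq_eq_norm_sq, Real.sqrt_sq (norm_nonneg _)]
    rw [h1]
    have h2 : Real.sqrt (Real.cos α * S ^ 2) ≤ Real.sqrt (Complex.normSq (∑ i, w i)) :=
      Real.sqrt_le_sqrt hnormSq
    have h3 : Real.sqrt (Real.cos α * S ^ 2) = Real.sqrt (Real.cos α) * S := by
      rw [Real.sqrt_mul hc.le, Real.sqrt_sq hSpos.le]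
    linarith
  constructor
  · exact habs_sum
  · intro h0
    rw [h0] at habs_sum
    simp at habs_sum
    have : 0 < Real.sqrt (Real.cos α) * S := by positivity
    linarith
end
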